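/- Let {e_k} be an orthonormal basis of a Hilbert space H, T a bounded operator on H, h ∈ H, and ℓ ∈ ℕ. Suppose T_ℓ is a bounded surjective operator on H with T_ℓ^ℓ = T. If {T^n h}_{n=0}^∞ is a frame for H, then {T_ℓ^n h}_{n=0}^∞ is also a frame for H. -/

import Mathlib

open Filter Finset Topology
open scoped ComplexInnerProductSpace

/-- If `T_ℓ` is a bounded surjective operator with `T_ℓ^ℓ = T` and `{T^n h}` is a frame,
then `{T_ℓ^n h}` is also a frame. -/
theorem stmt_18 {H : Type*} [NormedAddCommGroup H] [InnerProductSpace ℂ H]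
    [CompleteSpace H]
    (b : HilbertBasis ℕ ℂ H)
    (T Tl : H →L[ℂ] H) (h : H) (ℓ : ℕ) (hℓ : 1 ≤ ℓ)
    (hsurj : Function.Surjective Tl) (hpow : Tl ^ ℓ = T)
    (hframe : ∃ A B : ℝ, 0 < A ∧ 0 < B ∧ ∀ x : H,
      A * ‖x‖ ^ 2 ≤ ∑' n : ℕ, ‖⟪x, (T ^ n) h⟫‖ ^ 2 ∧
      ∑' n : ℕ, ‖⟪x, (T ^ n) h⟫‖ ^ 2 ≤ B * ‖x‖ ^ 2) :
    ∃ A B : ℝ, 0 < A ∧ 0 < B ∧ ∀ x : H,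
      A * ‖x‖ ^ 2 ≤ ∑' n : ℕ, ‖⟪x, (Tl ^ n) h⟫‖ ^ 2 ∧
      ∑' n : ℕ, ‖⟪x, (Tl ^ n) h⟫‖ ^ 2 ≤ B * ‖x‖ ^ 2 := by
  obtain ⟨A, B, hA, hB, hAB⟩ := hframe
  haveI : NeZero ℓ := ⟨by omega⟩
  -- summability of the T-frame sums
  have hsum : ∀ x : H, Summable fun n : ℕ => ‖⟪x, (T ^ n) h⟫‖ ^ 2 := by
    intro x
    by_contra hns
    have h0 : ∑' n : ℕ, ‖⟪x, (T ^ n) h⟫‖ ^ 2 = 0 := tsum_eq_zero_of_not_summable hns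
    have h1 := (hAB x).1
    rw [h0] at h1
    have hx2 : ‖x‖ ^ 2 = 0 := le_antisymm (by nlinarith) (sq_nonneg _)
    have hx0 : x = 0 := norm_eq_zero.mp (pow_eq_zero_iff two_ne_zero |>.mp hx2)
    apply hns
    have hz : (fun n : ℕ => ‖⟪x, (T ^ n) h⟫‖ ^ 2) = fun _ => (0 : ℝ) := by
      funext n; simp [hx0]
    rw [hz]; exact summable_zero
  set adj := fun (r : Fin ℓ) => ContinuousLinearMap.adjoint (Tl ^ (r : ℕ)) with hadj
  have hterm : ∀ (x : H) (r : Fin ℓ) (q : ℕ),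
      ‖⟪x, (Tl ^ ((r : ℕ) + ℓ * q)) h⟫‖ ^ 2 = ‖⟪adj r x, (T ^ q) h⟫‖ ^ 2 := by
    intro x r q
    rw [pow_add, pow_mul, hpow, ContinuousLinearMap.mul_apply,
      hadj, ContinuousLinearMap.adjoint_inner_left]
  have hsumg : ∀ x : H,
      Summable fun p : Fin ℓ × ℕ => ‖⟪x, (Tl ^ ((p.1 : ℕ) + ℓ * p.2)) h⟫‖ ^ 2 := by
    intro x
    rw [summable_prod_of_nonneg (fun p => by positivity)]
    refine ⟨fun r => ?_, Summable.of_finite⟩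
    simpa only [hterm x] using hsum (adj r x)
  have key : ∀ x : H, ∑' n : ℕ, ‖⟪x, (Tl ^ n) h⟫‖ ^ 2
      = ∑ r : Fin ℓ, ∑' q : ℕ, ‖⟪adj r x, (T ^ q) h⟫‖ ^ 2 := by
    intro x
    let e : ℕ ≃ Fin ℓ × ℕ := (Nat.divModEquiv ℓ).trans (Equiv.prodComm _ _)
    have hn : ∀ n : ℕ, ((e n).1 : ℕ) + ℓ * ((e n).2) = n := by
      intro n
      show ((Fin.ofNat ℓ n : Fin ℓ) : ℕ) + ℓ * (n / ℓ) = n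
      rw [Fin.val_ofNat]; exact Nat.mod_add_div n ℓ
    calc ∑' n : ℕ, ‖⟪x, (Tl ^ n) h⟫‖ ^ 2
        = ∑' n : ℕ, ‖⟪x, (Tl ^ (((e n).1 : ℕ) + ℓ * (e n).2)) h⟫‖ ^ 2 := by
          apply tsum_congr; intro n; rw [hn n]
      _ = ∑' p : Fin ℓ × ℕ, ‖⟪x, (Tl ^ ((p.1 : ℕ) + ℓ * p.2)) h⟫‖ ^ 2 :=
          e.tsum_eq fun p : Fin ℓ × ℕ => ‖⟪x, (Tl ^ ((p.1 : ℕ) + ℓ * p.2)) h⟫‖ ^ 2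
      _ = ∑' r : Fin ℓ, ∑' q : ℕ, ‖⟪x, (Tl ^ ((r : ℕ) + ℓ * q)) h⟫‖ ^ 2 :=
          Summable.tsum_prod (hsumg x)
      _ = ∑' r : Fin ℓ, ∑' q : ℕ, ‖⟪adj r x, (T ^ q) h⟫‖ ^ 2 := by
          apply tsum_congr; intro r; apply tsum_congr; intro q; exact hterm x r q
      _ = ∑ r : Fin ℓ, ∑' q : ℕ, ‖⟪adj r x, (T ^ q) h⟫‖ ^ 2 := tsum_fintype _
  set C : ℝ := (∑ r : Fin ℓ, ‖Tl ^ (r : ℕ)‖ ^ 2) + 1 with hC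
  have hCpos : 0 < C := by positivity
  refine ⟨A, B * C, hA, by positivity, fun x => ?_⟩
  rw [key x]
  constructor
  · have hle : ∑' q : ℕ, ‖⟪adj 0 x, (T ^ q) h⟫‖ ^ 2
        ≤ ∑ r : Fin ℓ, ∑' q : ℕ, ‖⟪adj r x, (T ^ q) h⟫‖ ^ 2 :=
      Finset.single_le_sum (f := fun r : Fin ℓ => ∑' q : ℕ, ‖⟪adj r x, (T ^ q) h⟫‖ ^ 2)
        (fun r _ => tsum_nonneg (fun q => by positivity))
        (Finset.mem_univ (0 : Fin ℓ))
    have hzero : adj 0 x = x := by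
      simp [hadj, ContinuousLinearMap.one_def]
    rw [hzero] at hle
    exact le_trans (hAB x).1 hle
  · have hstep : ∀ r : Fin ℓ, ∑' q : ℕ, ‖⟪adj r x, (T ^ q) h⟫‖ ^ 2
        ≤ B * (‖Tl ^ (r : ℕ)‖ ^ 2 * ‖x‖ ^ 2) := by
      intro r
      refine le_trans (hAB (adj r x)).2 ?_
      have hn : ‖adj r x‖ ≤ ‖Tl ^ (r : ℕ)‖ * ‖x‖ := by
        calc ‖adj r x‖ ≤ ‖adj r‖ * ‖x‖ := (adj r).le_opNorm x
          _ = ‖Tl ^ (r : ℕ)‖ * ‖x‖ := by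
              rw [hadj]; congr 1
              exact ContinuousLinearMap.adjoint.norm_map (Tl ^ (r : ℕ))
      have := mul_le_mul hn hn (norm_nonneg _) (by positivity)
      nlinarith [norm_nonneg x, norm_nonneg (Tl ^ (r : ℕ))]
    calc ∑ r : Fin ℓ, ∑' q : ℕ, ‖⟪adj r x, (T ^ q) h⟫‖ ^ 2
        ≤ ∑ r : Fin ℓ, B * (‖Tl ^ (r : ℕ)‖ ^ 2 * ‖x‖ ^ 2) :=
          Finset.sum_le_sum (fun r _ => hstep r)
      _ = B * ((∑ r : Fin ℓ, ‖Tl ^ (r : ℕ)‖ ^ 2) * ‖x‖ ^ 2) := by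
          rw [← Finset.mul_sum, ← Finset.sum_mul]
      _ ≤ B * C * ‖x‖ ^ 2 := by
          have hS : (∑ r : Fin ℓ, ‖Tl ^ (r : ℕ)‖ ^ 2) ≤ C := by
            rw [hC]; linarith
          rw [mul_assoc]
          exact mul_le_mul_of_nonneg_left
            (mul_le_mul_of_nonneg_right hS (sq_nonneg _)) hB.le
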